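/- Assume β ≥ (p-1)·max{μ₁, μ₂}. If k, l ≥ 0 with (k, l) ≠ (0, 0), k + l ≤ k₀ + l₀, μ₁ k^{p-1} + β k^{p/2-1} l^{p/2} ≥ 1, and μ₂ l^{p-1} + β l^{p/2-1} k^{p/2} ≥ 1, then (k, l) = (k₀, l₀). -/

import Mathlib

open Real

/-- Strict two-term weighted AM-GM via Bernoulli. -/
lemma amgm_strict {q s y : ℝ} (hq1 : 1 < q) (hs : 0 < s) (hy : 0 < y)
    (hne : s ≠ y) : s ^ (q - 1) * y < (((q - 1) * s + y) / q) ^ q := by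
  have hq0 : 0 < q := by linarith
  set r : ℝ := y / s with hr
  have hr0 : 0 < r := div_pos hy hs
  have hrne : r ≠ 1 := by
    intro h
    apply hne
    have : y = s := by
      rw [hr, div_eq_one_iff_eq hs.ne'] at h
      linarith
    exact this.symm
  have hz : -1 ≤ (r - 1) / q := by
    rw [le_div_iff₀ hq0]; nlinarith
  have hzne : (r - 1) / q ≠ 0 := by
    intro h
    have : r - 1 = 0 := by
      field_simp at h
      linarith
    exact hrne (by linarith)
  have hber := one_add_mul_self_lt_rpow_one_add hz hzne hq1
  have h1 : 1 + q * ((r - 1) / q) = r := by field_simp; ring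
  have h2 : 1 + (r - 1) / q = ((q - 1) + r) / q := by field_simp; ring
  rw [h1, h2] at hber
  have hsq : (0:ℝ) < s ^ q := rpow_pos_of_pos hs q
  have key : s ^ q * r < s ^ q * (((q - 1) + r) / q) ^ q :=
    (mul_lt_mul_iff_right₀ hsq).2 hber
  have hsq' : s ^ q = s ^ (q - 1) * s := by
    rw [← Real.rpow_add_one hs.ne' (q - 1)]
    norm_num
  have e1 : s ^ q * r = s ^ (q - 1) * y := by
    rw [hsq', hr]
    field_simp
  have hA : (0:ℝ) ≤ ((q - 1) + r) / q := div_nonneg (by linarith) hq0.le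
  have e2 : s ^ q * (((q - 1) + r) / q) ^ q = (((q - 1) * s + y) / q) ^ q := by
    rw [← Real.mul_rpow hs.le hA]
    congr 1
    rw [hr]
    field_simp
  rw [e1, e2] at key
  exact key


lemma G_mono {q μ β : ℝ} (hq1 : 1 < q) (hq2 : q < 2) (hμ : 0 < μ) (hβ : 0 < β)
    (hβ' : (2 - q) * μ ≤ q * β) :
    StrictMonoOn (fun x : ℝ => x ^ q + ((x ^ (q - 1) - μ * x) / β) ^ q)
      (Set.Ioc 0 (μ ^ (q - 2)⁻¹)) := by
  have hq0 : (0:ℝ) < q := by linarith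
  have hq2' : q - 2 ≠ 0 := by intro h; linarith [h]
  have hq2neg : q - 2 < 0 := by linarith
  set f : ℝ → ℝ := fun x : ℝ => x ^ q + ((x ^ (q - 1) - μ * x) / β) ^ q with hf
  set a : ℝ := μ ^ (q - 2)⁻¹ with ha_def
  set c : ℝ := (2 * μ / q) ^ (q - 2)⁻¹ with hc_def
  have ha : 0 < a := rpow_pos_of_pos hμ _
  have h2μq : μ < 2 * μ / q := by
    rw [lt_div_iff₀ hq0]; nlinarith
  have hc : 0 < c := rpow_pos_of_pos (by positivity) _
  have hinvneg : (q - 2)⁻¹ < 0 := inv_lt_zero.mpr hq2neg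
  have hca : c < a := by
    rw [ha_def, hc_def]
    exact rpow_lt_rpow_of_neg hμ h2μq hinvneg
  have haq : a ^ (q - 2) = μ := by
    rw [ha_def, ← Real.rpow_mul hμ.le, inv_mul_cancel₀ hq2', Real.rpow_one]
  have hcq : c ^ (q - 2) = 2 * μ / q := by
    rw [hc_def, ← Real.rpow_mul (by positivity), inv_mul_cancel₀ hq2', Real.rpow_one]
  -- splitting of exponents
  have hsplit : ∀ z : ℝ, 0 < z → z ^ (q - 1) = z ^ (q - 2) * z := by
    intro z hz
    rw [show q - 1 = q - 2 + 1 by ring, Real.rpow_add_one hz.ne']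
  -- ψ x > 0 on (0, a)
  have hψpos : ∀ x : ℝ, 0 < x → x < a → 0 < x ^ (q - 1) - μ * x := by
    intro x hx hxa
    have h1 : a ^ (q - 2) < x ^ (q - 2) := rpow_lt_rpow_of_neg hx hxa hq2neg
    rw [haq] at h1
    rw [hsplit x hx]
    nlinarith
  -- derivative positivity
  have hderiv : ∀ x : ℝ, 0 < x → x < a → x ≠ c → 0 < deriv f x := by
    intro x hx hxa hxc
    have hx0 : x ≠ 0 := hx.ne'
    have hψ := hψpos x hx hxa
    have hwpos : 0 < (x ^ (q - 1) - μ * x) / β := div_pos hψ hβ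
    have h1 : HasDerivAt (fun x : ℝ => x ^ q) (q * x ^ (q - 1)) x :=
      Real.hasDerivAt_rpow_const (Or.inl hx0)
    have h2a : HasDerivAt (fun x : ℝ => x ^ (q - 1)) ((q - 1) * x ^ (q - 2)) x := by
      have := Real.hasDerivAt_rpow_const (x := x) (p := q - 1) (Or.inl hx0)
      rwa [show q - 1 - 1 = q - 2 by ring] at this
    have h2b : HasDerivAt (fun x : ℝ => μ * x) μ x := by
      simpa using (hasDerivAt_id x).const_mul μ
    have h3 : HasDerivAt (fun x : ℝ => (x ^ (q - 1) - μ * x) / β)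
        (((q - 1) * x ^ (q - 2) - μ) / β) x := (h2a.sub h2b).div_const β
    have h4 : HasDerivAt (fun x : ℝ => ((x ^ (q - 1) - μ * x) / β) ^ q)
        (((q - 1) * x ^ (q - 2) - μ) / β * q * ((x ^ (q - 1) - μ * x) / β) ^ (q - 1)) x :=
      h3.rpow_const (Or.inl hwpos.ne')
    have hfd : HasDerivAt f
        (q * x ^ (q - 1) +
          ((q - 1) * x ^ (q - 2) - μ) / β * q * ((x ^ (q - 1) - μ * x) / β) ^ (q - 1)) x :=
      h1.add h4
    rw [hfd.deriv]
    -- positivity of the derivative expression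
    set t : ℝ := x ^ (q - 2) with ht
    have htpos : 0 < t := rpow_pos_of_pos hx _
    have htμ : μ < t := by
      have h1' : a ^ (q - 2) < x ^ (q - 2) := rpow_lt_rpow_of_neg hx hxa hq2neg
      rwa [haq] at h1'
    have hxq1pos : 0 < x ^ (q - 1) := rpow_pos_of_pos hx _
    rcases le_or_gt 0 ((q - 1) * t - μ) with hD | hD
    · have hw1 : (0:ℝ) ≤ ((x ^ (q - 1) - μ * x) / β) ^ (q - 1) := (rpow_pos_of_pos hwpos _).le
      have : 0 ≤ ((q - 1) * x ^ (q - 2) - μ) / β * q * ((x ^ (q - 1) - μ * x) / β) ^ (q - 1) := by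
        apply mul_nonneg (mul_nonneg (div_nonneg (by rw [← ht]; exact hD) hβ.le) hq0.le) hw1
      nlinarith [mul_pos hq0 hxq1pos]
    · -- the hard case
      set s : ℝ := t - μ with hs_def
      set y : ℝ := μ - (q - 1) * t with hy_def
      have hs : 0 < s := by rw [hs_def]; linarith
      have hy : 0 < y := by rw [hy_def]; linarith
      have hsy : s ≠ y := by
        intro h
        apply hxc
        have hts : t = 2 * μ / q := by
          rw [hs_def, hy_def] at h
          field_simp
          nlinarith [h]
        have : x ^ (q - 2) = c ^ (q - 2) := by rw [← ht, hts, hcq]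
        calc x = (x ^ (q - 2)) ^ (q - 2)⁻¹ := by
                rw [← Real.rpow_mul hx.le, mul_inv_cancel₀ hq2', Real.rpow_one]
          _ = (c ^ (q - 2)) ^ (q - 2)⁻¹ := by rw [this]
          _ = c := by rw [← Real.rpow_mul hc.le, mul_inv_cancel₀ hq2', Real.rpow_one]
      have hsum : (q - 1) * s + y = (2 - q) * μ := by rw [hs_def, hy_def]; ring
      have hβq : s ^ (q - 1) * y < β ^ q := by
        calc s ^ (q - 1) * y < (((q - 1) * s + y) / q) ^ q := amgm_strict hq1 hs hy hsy
          _ = ((2 - q) * μ / q) ^ q := by rw [hsum]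
          _ ≤ β ^ q := by
              apply rpow_le_rpow (div_nonneg (mul_nonneg (by linarith) hμ.le) hq0.le) _ hq0.le
              rw [div_le_iff₀ hq0]
              linarith
      -- rewrite w
      have hψx : x ^ (q - 1) - μ * x = x * s := by
        rw [hsplit x hx, hs_def, ← ht]; ring
      have hwq1 : ((x ^ (q - 1) - μ * x) / β) ^ (q - 1)
          = x ^ (q - 1) * (s ^ (q - 1) / β ^ (q - 1)) := by
        rw [hψx, show x * s / β = x * (s / β) by ring,
          Real.mul_rpow hx.le (div_nonneg hs.le hβ.le), Real.div_rpow hs.le hβ.le]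
      have hβq' : β ^ (q - 1) * β = β ^ q := by
        rw [← Real.rpow_add_one hβ.ne' (q - 1)]; norm_num
      have hfrac : s ^ (q - 1) * y / β ^ q < 1 := by
        rw [div_lt_one (rpow_pos_of_pos hβ q)]; exact hβq
      have hkey : y / β * (((x ^ (q - 1) - μ * x) / β) ^ (q - 1)) < x ^ (q - 1) := by
        rw [hwq1]
        have heq : y / β * (x ^ (q - 1) * (s ^ (q - 1) / β ^ (q - 1)))
            = x ^ (q - 1) * (s ^ (q - 1) * y / (β ^ (q - 1) * β)) := by
          field_simp
        rw [heq, hβq']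
        calc x ^ (q - 1) * (s ^ (q - 1) * y / β ^ q) < x ^ (q - 1) * 1 :=
              (mul_lt_mul_iff_right₀ hxq1pos).2 hfrac
          _ = x ^ (q - 1) := mul_one _
      have hDy : ((q - 1) * x ^ (q - 2) - μ) / β = -(y / β) := by
        rw [hy_def, ← ht]; ring
      rw [hDy]
      have hgoal : -(y / β) * q * ((x ^ (q - 1) - μ * x) / β) ^ (q - 1)
          = -(q * (y / β * (((x ^ (q - 1) - μ * x) / β) ^ (q - 1)))) := by ring
      rw [hgoal]
      have := mul_lt_mul_of_pos_left hkey hq0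
      linarith
  -- continuity
  have hcont : ContinuousOn f (Set.Ioi 0) := by
    have c1 : ContinuousOn (fun x : ℝ => x ^ q) (Set.Ioi 0) :=
      fun x hx => (Real.continuousAt_rpow_const x q (Or.inl (ne_of_gt hx))).continuousWithinAt
    have c1' : ContinuousOn (fun x : ℝ => x ^ (q - 1)) (Set.Ioi 0) :=
      fun x hx => (Real.continuousAt_rpow_const x (q - 1) (Or.inl (ne_of_gt hx))).continuousWithinAt
    have c2 : ContinuousOn (fun x : ℝ => (x ^ (q - 1) - μ * x) / β) (Set.Ioi 0) :=
      (c1'.sub ((continuousOn_id.const_smul μ).congr (by intro x _; simp [smul_eq_mul]))).div_const β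
    have c3 : ContinuousOn (fun x : ℝ => ((x ^ (q - 1) - μ * x) / β) ^ q) (Set.Ioi 0) :=
      c2.rpow_const (fun x _ => Or.inr hq0.le)
    exact c1.add c3
  -- two pieces
  have m₁ : StrictMonoOn f (Set.Ioc 0 c) := by
    apply strictMonoOn_of_deriv_pos (convex_Ioc 0 c)
      (hcont.mono (fun x hx => hx.1))
    intro x hx
    rw [interior_Ioc] at hx
    exact hderiv x hx.1 (hx.2.trans hca) (ne_of_lt hx.2)
  have m₂ : StrictMonoOn f (Set.Icc c a) := by
    apply strictMonoOn_of_deriv_pos (convex_Icc c a)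
      (hcont.mono (fun x hx => lt_of_lt_of_le hc hx.1))
    intro x hx
    rw [interior_Icc] at hx
    exact hderiv x (hc.trans hx.1) hx.2 (ne_of_gt hx.1)
  -- glue
  intro x hx y hy hxy
  rcases le_or_gt y c with hyc | hyc
  · exact m₁ ⟨hx.1, hxy.le.trans hyc⟩ ⟨hy.1, hyc⟩ hxy
  · rcases le_or_gt x c with hxc | hxc
    · rcases eq_or_lt_of_le hxc with rfl | hxc'
      · exact m₂ ⟨le_refl _, hx.2⟩ ⟨hyc.le, hy.2⟩ hxy
      · calc f x < f c := m₁ ⟨hx.1, hxc⟩ ⟨hc, le_refl _⟩ hxc'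
          _ < f y := m₂ ⟨le_refl _, hca.le⟩ ⟨hyc.le, hy.2⟩ hyc
    · exact m₂ ⟨hxc.le, hx.2⟩ ⟨(hxc.trans hxy).le, hy.2⟩ hxy


lemma key_le {q μ β u₀ v₀ u v : ℝ} (hq1 : 1 < q) (hq2 : q < 2)
    (hμ : 0 < μ) (hβ : 0 < β) (hβ' : (2 - q) * μ ≤ q * β)
    (hu₀ : 0 < u₀) (hv₀ : 0 < v₀) (hu : 0 < u) (hv : 0 < v)
    (h₀ : μ * u₀ + β * v₀ = u₀ ^ (q - 1))
    (hA : u ^ (q - 1) ≤ μ * u + β * v)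
    (hσ : u ^ q + v ^ q ≤ u₀ ^ q + v₀ ^ q) : u ≤ u₀ := by
  by_contra hcon
  push_neg at hcon
  have hq0 : (0:ℝ) < q := by linarith
  have hq2' : q - 2 ≠ 0 := by intro h; linarith [h]
  have hq2neg : q - 2 < 0 := by linarith
  set a : ℝ := μ ^ (q - 2)⁻¹ with ha_def
  have ha : 0 < a := rpow_pos_of_pos hμ _
  have haq : a ^ (q - 2) = μ := by
    rw [ha_def, ← Real.rpow_mul hμ.le, inv_mul_cancel₀ hq2', Real.rpow_one]
  have hsplit : ∀ z : ℝ, 0 < z → z ^ (q - 1) = z ^ (q - 2) * z := by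
    intro z hz
    rw [show q - 1 = q - 2 + 1 by ring, Real.rpow_add_one hz.ne']
  have mono := G_mono hq1 hq2 hμ hβ hβ'
  set f : ℝ → ℝ := fun x : ℝ => x ^ q + ((x ^ (q - 1) - μ * x) / β) ^ q with hf
  have hψ₀ : u₀ ^ (q - 1) - μ * u₀ = β * v₀ := by linarith
  -- u₀ < a
  have hu₀a : u₀ < a := by
    have h1 : μ < u₀ ^ (q - 2) := by
      have h2 : u₀ ^ (q - 2) * u₀ - μ * u₀ = β * v₀ := by
        rw [← hsplit u₀ hu₀]; exact hψ₀
      nlinarith [mul_pos hβ hv₀]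
    by_contra hcc
    push_neg at hcc
    rcases eq_or_lt_of_le hcc with h | hlt
    · rw [← h, haq] at h1; exact lt_irrefl _ h1
    · have h2 := Real.rpow_lt_rpow_of_neg ha hlt hq2neg
      rw [haq] at h2
      linarith
  have hfu₀ : f u₀ = u₀ ^ q + v₀ ^ q := by
    have hv₀' : (u₀ ^ (q - 1) - μ * u₀) / β = v₀ := by
      rw [hψ₀]; field_simp
    simp only [hf, hv₀']
  have hu₀mem : u₀ ∈ Set.Ioc (0:ℝ) a := ⟨hu₀, hu₀a.le⟩
  rcases le_or_gt u a with hua | hau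
  · -- u ≤ a
    have humem : u ∈ Set.Ioc (0:ℝ) a := ⟨hu, hua⟩
    have hm : f u₀ < f u := mono hu₀mem humem hcon
    -- ψ(u) ≥ 0
    have hψu : 0 ≤ u ^ (q - 1) - μ * u := by
      have h1 : μ ≤ u ^ (q - 2) := by
        rcases eq_or_lt_of_le hua with rfl | hlt
        · rw [haq]
        · have := Real.rpow_lt_rpow_of_neg hu hlt hq2neg
          rw [haq] at this
          exact this.le
      rw [hsplit u hu]
      nlinarith
    have hbase : (u ^ (q - 1) - μ * u) / β ≤ v := by
      rw [div_le_iff₀ hβ]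
      nlinarith [hA]
    have hvq : ((u ^ (q - 1) - μ * u) / β) ^ q ≤ v ^ q :=
      rpow_le_rpow (div_nonneg hψu hβ.le) hbase hq0.le
    have : f u ≤ u ^ q + v ^ q := by
      simp only [hf]
      linarith
    rw [hfu₀] at hm
    linarith
  · -- a < u
    have hamem : a ∈ Set.Ioc (0:ℝ) a := ⟨ha, le_refl _⟩
    have h1 : f u₀ < f a := mono hu₀mem hamem hu₀a
    have hψa : a ^ (q - 1) - μ * a = 0 := by
      rw [hsplit a ha, haq]; ring
    have hfa : f a = a ^ q := by
      simp only [hf, hψa, zero_div, Real.zero_rpow hq0.ne', add_zero]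
    have haqu : a ^ q < u ^ q := rpow_lt_rpow ha.le hau hq0
    have hvq : 0 < v ^ q := rpow_pos_of_pos hv q
    rw [hfu₀, hfa] at h1
    linarith


set_option maxHeartbeats 1000000 in
theorem stmt_5 (N : ℕ) (hN : 5 ≤ N) (p : ℝ) (hp : p = (N : ℝ) / ((N : ℝ) - 2))
    (μ₁ μ₂ β : ℝ) (hμ₁ : 0 < μ₁) (hμ₂ : 0 < μ₂) (hβ : 0 < β)
    (hβ' : (p - 1) * max μ₁ μ₂ ≤ β)
    (k₀ l₀ : ℝ) (hk₀ : 0 < k₀) (hl₀ : 0 < l₀)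
    (he₁ : μ₁ * k₀ ^ (p - 1) + β * k₀ ^ (p / 2 - 1) * l₀ ^ (p / 2) = 1)
    (he₂ : μ₂ * l₀ ^ (p - 1) + β * l₀ ^ (p / 2 - 1) * k₀ ^ (p / 2) = 1)
    (hmin : ∀ k l : ℝ, 0 < k → 0 < l →
      μ₁ * k ^ (p - 1) + β * k ^ (p / 2 - 1) * l ^ (p / 2) = 1 →
      μ₂ * l ^ (p - 1) + β * l ^ (p / 2 - 1) * k ^ (p / 2) = 1 →
      k₀ ≤ k)
    (k l : ℝ) (hk : 0 ≤ k) (hl : 0 ≤ l) (hkl : ¬(k = 0 ∧ l = 0))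
    (hsum : k + l ≤ k₀ + l₀)
    (hi₁ : 1 ≤ μ₁ * k ^ (p - 1) + β * k ^ (p / 2 - 1) * l ^ (p / 2))
    (hi₂ : 1 ≤ μ₂ * l ^ (p - 1) + β * l ^ (p / 2 - 1) * k ^ (p / 2)) :
    k = k₀ ∧ l = l₀ := by
  -- basic facts about p
  have hNR : (5:ℝ) ≤ (N:ℝ) := by exact_mod_cast hN
  have hN2 : (0:ℝ) < (N:ℝ) - 2 := by linarith
  have hp1 : 1 < p := by rw [hp, lt_div_iff₀ hN2]; linarith
  have hp2 : p < 2 := by rw [hp, div_lt_iff₀ hN2]; linarith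
  have hp0 : 0 < p := by linarith
  set q : ℝ := 2 / p with hq_def
  have hq1 : 1 < q := by rw [hq_def, lt_div_iff₀ hp0]; linarith
  have hq2 : q < 2 := by rw [hq_def, div_lt_iff₀ hp0]; linarith
  have hq0 : 0 < q := by linarith
  -- k, l are positive
  have hk0 : 0 < k := by
    rcases eq_or_lt_of_le hk with h | h
    · exfalso
      rw [← h] at hi₁
      rw [Real.zero_rpow (by intro hh; linarith [hh] : p - 1 ≠ 0),
        Real.zero_rpow (by intro hh; linarith [hh] : p / 2 - 1 ≠ 0)] at hi₁
      simp at hi₁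
      linarith
    · exact h
  have hl0 : 0 < l := by
    rcases eq_or_lt_of_le hl with h | h
    · exfalso
      rw [← h] at hi₂
      rw [Real.zero_rpow (by intro hh; linarith [hh] : p - 1 ≠ 0),
        Real.zero_rpow (by intro hh; linarith [hh] : p / 2 - 1 ≠ 0)] at hi₂
      simp at hi₂
      linarith
    · exact h
  -- substitution
  set u : ℝ := k ^ (p / 2) with hu_def
  set v : ℝ := l ^ (p / 2) with hv_def
  set u₀ : ℝ := k₀ ^ (p / 2) with hu₀_def
  set v₀ : ℝ := l₀ ^ (p / 2) with hv₀_def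
  have hupos : 0 < u := rpow_pos_of_pos hk0 _
  have hvpos : 0 < v := rpow_pos_of_pos hl0 _
  have hu₀pos : 0 < u₀ := rpow_pos_of_pos hk₀ _
  have hv₀pos : 0 < v₀ := rpow_pos_of_pos hl₀ _
  -- power identities
  have e1 : ∀ z : ℝ, 0 < z → (z ^ (p / 2)) ^ q = z := by
    intro z hz
    rw [← Real.rpow_mul hz.le, hq_def, show p / 2 * (2 / p) = 1 by field_simp, Real.rpow_one]
  have e2 : ∀ z : ℝ, 0 < z → (z ^ (p / 2)) ^ (q - 1) = z ^ (1 - p / 2) := by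
    intro z hz
    rw [← Real.rpow_mul hz.le]
    congr 1
    rw [hq_def]
    field_simp
  -- the transformation identity
  have key_tr : ∀ (μ k l : ℝ), 0 < k →
      (μ * k ^ (p - 1) + β * k ^ (p / 2 - 1) * l ^ (p / 2)) * k ^ (1 - p / 2)
        = μ * k ^ (p / 2) + β * l ^ (p / 2) := by
    intro μ k l hkk
    have h1 : k ^ (p - 1) * k ^ (1 - p / 2) = k ^ (p / 2) := by
      rw [← Real.rpow_add hkk]; congr 1; ring
    have h2 : k ^ (p / 2 - 1) * k ^ (1 - p / 2) = 1 := by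
      rw [← Real.rpow_add hkk, show p / 2 - 1 + (1 - p / 2) = 0 by ring, Real.rpow_zero]
    calc (μ * k ^ (p - 1) + β * k ^ (p / 2 - 1) * l ^ (p / 2)) * k ^ (1 - p / 2)
        = μ * (k ^ (p - 1) * k ^ (1 - p / 2))
          + β * l ^ (p / 2) * (k ^ (p / 2 - 1) * k ^ (1 - p / 2)) := by ring
      _ = μ * k ^ (p / 2) + β * l ^ (p / 2) := by rw [h1, h2, mul_one]
  -- transformed inequalities
  have hA : u ^ (q - 1) ≤ μ₁ * u + β * v := by
    have h := mul_le_mul_of_nonneg_right hi₁ (rpow_pos_of_pos hk0 (1 - p / 2)).le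
    rw [one_mul, key_tr μ₁ k l hk0] at h
    rw [hu_def, hv_def, e2 k hk0]
    exact h
  have hB : v ^ (q - 1) ≤ μ₂ * v + β * u := by
    have h := mul_le_mul_of_nonneg_right hi₂ (rpow_pos_of_pos hl0 (1 - p / 2)).le
    rw [one_mul, key_tr μ₂ l k hl0] at h
    rw [hu_def, hv_def, e2 l hl0]
    exact h
  have hA₀ : μ₁ * u₀ + β * v₀ = u₀ ^ (q - 1) := by
    have h := congrArg (· * k₀ ^ (1 - p / 2)) he₁
    simp only [one_mul] at h
    rw [key_tr μ₁ k₀ l₀ hk₀] at h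
    rw [hu₀_def, hv₀_def, e2 k₀ hk₀]
    exact h
  have hB₀ : μ₂ * v₀ + β * u₀ = v₀ ^ (q - 1) := by
    have h := congrArg (· * l₀ ^ (1 - p / 2)) he₂
    simp only [one_mul] at h
    rw [key_tr μ₂ l₀ k₀ hl₀] at h
    rw [hu₀_def, hv₀_def, e2 l₀ hl₀]
    exact h
  have hσ : u ^ q + v ^ q ≤ u₀ ^ q + v₀ ^ q := by
    rw [hu_def, hv_def, hu₀_def, hv₀_def, e1 k hk0, e1 l hl0, e1 k₀ hk₀, e1 l₀ hl₀]
    exact hsum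
  -- beta conditions
  have hb1 : (2 - q) * μ₁ ≤ q * β := by
    have h1 : (p - 1) * μ₁ ≤ β :=
      le_trans (mul_le_mul_of_nonneg_left (le_max_left μ₁ μ₂) (by linarith : (0:ℝ) ≤ p - 1)) hβ'
    have h2 : (2 - q) * μ₁ = (2 / p) * ((p - 1) * μ₁) := by
      rw [hq_def]; field_simp
    rw [h2, hq_def]
    exact mul_le_mul_of_nonneg_left h1 (by positivity)
  have hb2 : (2 - q) * μ₂ ≤ q * β := by
    have h1 : (p - 1) * μ₂ ≤ β :=
      le_trans (mul_le_mul_of_nonneg_left (le_max_right μ₁ μ₂) (by linarith : (0:ℝ) ≤ p - 1)) hβ'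
    have h2 : (2 - q) * μ₂ = (2 / p) * ((p - 1) * μ₂) := by
      rw [hq_def]; field_simp
    rw [h2, hq_def]
    exact mul_le_mul_of_nonneg_left h1 (by positivity)
  -- apply the key lemma on both sides
  have hu_le : u ≤ u₀ := key_le hq1 hq2 hμ₁ hβ hb1 hu₀pos hv₀pos hupos hvpos hA₀ hA hσ
  have hv_le : v ≤ v₀ := key_le hq1 hq2 hμ₂ hβ hb2 hv₀pos hu₀pos hvpos hupos hB₀ hB (by linarith)
  -- now force equality
  have heq : u = u₀ ∧ v = v₀ := by
    rcases le_total (u * v₀) (v * u₀) with hcase | hcase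
    · -- v/v₀ ≥ u/u₀ : use B side
      set m : ℝ := v / v₀ with hm_def
      have hm0 : 0 < m := div_pos hvpos hv₀pos
      have hm1 : m ≤ 1 := by rw [hm_def, div_le_one hv₀pos]; exact hv_le
      have hveq : v = m * v₀ := by rw [hm_def]; field_simp
      have hule : u ≤ m * u₀ := by
        rw [hm_def, div_mul_eq_mul_div, le_div_iff₀ hv₀pos]
        exact hcase
      have hmeq1 : m = 1 := by
        by_contra hmne
        have hmlt : m < 1 := lt_of_le_of_ne hm1 hmne
        have chain : v ^ (q - 1) ≤ m * v₀ ^ (q - 1) := by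
          calc v ^ (q - 1) ≤ μ₂ * v + β * u := hB
            _ ≤ m * (μ₂ * v₀ + β * u₀) := by
                have t1 : β * u ≤ β * (m * u₀) := mul_le_mul_of_nonneg_left hule hβ.le
                have t2 : μ₂ * v = μ₂ * (m * v₀) := by rw [← hveq]
                linarith [t1, t2]
            _ = m * v₀ ^ (q - 1) := by rw [hB₀]
        have hvpow : v ^ (q - 1) = m ^ (q - 1) * v₀ ^ (q - 1) := by
          rw [hveq, Real.mul_rpow hm0.le hv₀pos.le]
        have hv₀pow : 0 < v₀ ^ (q - 1) := rpow_pos_of_pos hv₀pos _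
        have hmle : m ^ (q - 1) ≤ m := by
          rw [hvpow] at chain
          exact le_of_mul_le_mul_right (by linarith [chain]) hv₀pow
        have : m ^ (1:ℝ) < m ^ (q - 1) :=
          Real.rpow_lt_rpow_of_exponent_gt hm0 hmlt (by linarith)
        rw [Real.rpow_one] at this
        linarith
      have hveq' : v = v₀ := by rw [hveq, hmeq1, one_mul]
      have hueq' : u = u₀ := by
        have h1 : v₀ ^ (q - 1) ≤ μ₂ * v₀ + β * u := by rw [← hveq']; exact hB
        have h2 : β * u₀ ≤ β * u := by linarith [hB₀]
        have := le_of_mul_le_mul_left (by linarith : β * u₀ ≤ β * u) hβ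
        linarith
      exact ⟨hueq', hveq'⟩
    · -- u/u₀ ≥ v/v₀ : use A side
      set m : ℝ := u / u₀ with hm_def
      have hm0 : 0 < m := div_pos hupos hu₀pos
      have hm1 : m ≤ 1 := by rw [hm_def, div_le_one hu₀pos]; exact hu_le
      have hueq : u = m * u₀ := by rw [hm_def]; field_simp
      have hvle : v ≤ m * v₀ := by
        rw [hm_def, div_mul_eq_mul_div, le_div_iff₀ hu₀pos]
        exact hcase
      have hmeq1 : m = 1 := by
        by_contra hmne
        have hmlt : m < 1 := lt_of_le_of_ne hm1 hmne
        have chain : u ^ (q - 1) ≤ m * u₀ ^ (q - 1) := by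
          calc u ^ (q - 1) ≤ μ₁ * u + β * v := hA
            _ ≤ m * (μ₁ * u₀ + β * v₀) := by
                have t1 : β * v ≤ β * (m * v₀) := mul_le_mul_of_nonneg_left hvle hβ.le
                have t2 : μ₁ * u = μ₁ * (m * u₀) := by rw [← hueq]
                linarith [t1, t2]
            _ = m * u₀ ^ (q - 1) := by rw [hA₀]
        have hupow : u ^ (q - 1) = m ^ (q - 1) * u₀ ^ (q - 1) := by
          rw [hueq, Real.mul_rpow hm0.le hu₀pos.le]
        have hu₀pow : 0 < u₀ ^ (q - 1) := rpow_pos_of_pos hu₀pos _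
        have hmle : m ^ (q - 1) ≤ m := by
          rw [hupow] at chain
          exact le_of_mul_le_mul_right (by linarith [chain]) hu₀pow
        have : m ^ (1:ℝ) < m ^ (q - 1) :=
          Real.rpow_lt_rpow_of_exponent_gt hm0 hmlt (by linarith)
        rw [Real.rpow_one] at this
        linarith
      have hueq' : u = u₀ := by rw [hueq, hmeq1, one_mul]
      have hveq' : v = v₀ := by
        have h1 : u₀ ^ (q - 1) ≤ μ₁ * u₀ + β * v := by rw [← hueq']; exact hA
        have := le_of_mul_le_mul_left (by linarith [hA₀] : β * v₀ ≤ β * v) hβ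
        linarith
      exact ⟨hueq', hveq'⟩
  constructor
  · rw [← e1 k hk0, ← e1 k₀ hk₀, ← hu_def, ← hu₀_def, heq.1]
  · rw [← e1 l hl0, ← e1 l₀ hl₀, ← hv_def, ← hv₀_def, heq.2]
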